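/- Let y_0 ∈ (0,1) and define h_0 = 1 + 2y_0²/(1-y_0²), y_{i+1} = (1 - 2/h_i) y_i, h_{i+1} = h_i + 4 y_{i+1}²/(1-y_{i+1}²). Then there exists δ > 0 such that for all 0 < y_0 < δ the series Σ_{j=0}^∞ |y_j| converges and its sum is less than 4. -/

import Mathlib

open Filter Finset

set_option maxHeartbeats 4000000

/-- The potential step inequality: the increment of `h` is dominated by `(2/t)` times
the decrease of `|y|`. -/
private lemma phi_step {t H A B : ℝ} (ht : 0 < t) (ht' : t ≤ 1/100)
    (hH1 : 1 + 2*t^2/(1-t^2) ≤ H) (hH2 : H ≤ 3001/1000)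
    (hA0 : 0 ≤ A) (hA : A ≤ t) (hB : B = |H - 2| / H * A) :
    4*B^2/(1-B^2) ≤ 2/t * (A - B) := by
  have ht2 : t^2 ≤ 1/10000 := by nlinarith
  have h1t : (0:ℝ) < 1 - t^2 := by nlinarith
  have he0 : 0 ≤ 2*t^2/(1-t^2) := by positivity
  have hHpos : (0:ℝ) < H := by linarith
  have hρ0 : 0 ≤ |H-2|/H := by positivity
  have hρ1 : |H-2|/H ≤ 1 := by
    rw [div_le_one hHpos]
    rcases abs_cases (H-2) with ⟨h1,h2⟩|⟨h1,h2⟩ <;> linarith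
  have hB0 : 0 ≤ B := by rw [hB]; positivity
  have hBA : B ≤ A := by rw [hB]; nlinarith
  have hBt : B ≤ t := hBA.trans hA
  have hB2pos : 0 < 1 - B^2 := by nlinarith
  have hB2 : 1 - t^2 ≤ 1 - B^2 := by nlinarith
  -- main scalar inequality
  have hmain : 2*t^2*(|H-2|/H)^2 ≤ (1 - |H-2|/H) * (1 - t^2) := by
    have he0' : 2*t^2 ≤ (H-1)*(1-t^2) := by
      have h1 : 2*t^2/(1-t^2) ≤ H - 1 := by linarith
      calc 2*t^2 = (2*t^2/(1-t^2))*(1-t^2) := by field_simp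
        _ ≤ (H-1)*(1-t^2) := by
            exact mul_le_mul_of_nonneg_right h1 h1t.le
    rcases le_or_gt H 2 with hc | hc
    · have habs : |H-2| = 2 - H := by rw [abs_of_nonpos (by linarith)]; ring
      rw [habs]
      have heq : 1 - (2-H)/H = (2*H-2)/H := by field_simp; ring
      have h1 : H - 1 ≤ 1 - (2-H)/H := by
        rw [heq, le_div_iff₀ hHpos]; nlinarith
      have hρle : (2-H)/H ≤ 1 := by rw [div_le_one hHpos]; linarith
      have hρge : (0:ℝ) ≤ (2-H)/H := div_nonneg (by linarith) hHpos.le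
      have c1 : (H-1)*(1-t^2) ≤ (1 - (2-H)/H)*(1-t^2) :=
        mul_le_mul_of_nonneg_right h1 h1t.le
      have hρsq : ((2-H)/H)^2 ≤ 1 := pow_le_one₀ hρge hρle
      have c2 : 2*t^2*((2-H)/H)^2 ≤ 2*t^2 := by
        calc 2*t^2*((2-H)/H)^2 ≤ 2*t^2*1 := by
              exact mul_le_mul_of_nonneg_left hρsq (by positivity)
          _ = 2*t^2 := by ring
      linarith
    · have habs : |H-2| = H - 2 := by rw [abs_of_pos (by linarith)]
      rw [habs]
      have heq : 1 - (H-2)/H = 2/H := by field_simp; ring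
      have h1 : (2000:ℝ)/3001 ≤ 2/H := by
        rw [div_le_div_iff₀ (by norm_num) hHpos]; nlinarith
      have hρle : (H-2)/H ≤ 1 := by rw [div_le_one hHpos]; linarith
      have hρge : (0:ℝ) ≤ (H-2)/H := div_nonneg (by linarith) hHpos.le
      have c1 : (2000:ℝ)/3001*(1-t^2) ≤ 2/H*(1-t^2) :=
        mul_le_mul_of_nonneg_right h1 h1t.le
      have heq' : (1 - (H-2)/H)*(1-t^2) = 2/H*(1-t^2) := by rw [heq]
      have hρsq : ((H-2)/H)^2 ≤ 1 := pow_le_one₀ hρge hρle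
      have c2 : 2*t^2*((H-2)/H)^2 ≤ 2*t^2 := by
        calc 2*t^2*((H-2)/H)^2 ≤ 2*t^2*1 := by
              exact mul_le_mul_of_nonneg_left hρsq (by positivity)
          _ = 2*t^2 := by ring
      nlinarith
  -- derive key from hmain
  have key : 2*t*B^2 ≤ (A - B) * (1 - B^2) := by
    rcases eq_or_lt_of_le hA0 with hAz | hApos
    · have : B = 0 := by rw [hB, ← hAz]; ring
      rw [this, ← hAz]; norm_num
    · have hAB : A - B = (1 - |H-2|/H) * A := by rw [hB]; ring
      have hBsq : B^2 = (|H-2|/H)^2 * A^2 := by rw [hB]; ring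
      have hAsq : A^2 ≤ t*A := by nlinarith
      have step1 : 2*t*((|H-2|/H)^2*A^2) ≤ (2*t^2*(|H-2|/H)^2)*A := by
        calc 2*t*((|H-2|/H)^2*A^2) = (2*t*(|H-2|/H)^2)*A^2 := by ring
          _ ≤ (2*t*(|H-2|/H)^2)*(t*A) :=
              mul_le_mul_of_nonneg_left hAsq (by positivity)
          _ = (2*t^2*(|H-2|/H)^2)*A := by ring
      have step2 : (2*t^2*(|H-2|/H)^2)*A ≤ ((1 - |H-2|/H)*(1-t^2))*A :=
        mul_le_mul_of_nonneg_right hmain hA0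
      have h1 : 0 ≤ 1 - |H-2|/H := by linarith
      have step3 : ((1 - |H-2|/H)*(1-t^2))*A ≤ (1 - |H-2|/H)*A*(1-B^2) := by
        calc ((1 - |H-2|/H)*(1-t^2))*A = ((1 - |H-2|/H)*A)*(1-t^2) := by ring
          _ ≤ ((1 - |H-2|/H)*A)*(1-B^2) :=
              mul_le_mul_of_nonneg_left hB2 (mul_nonneg h1 hA0)
          _ = (1 - |H-2|/H)*A*(1-B^2) := by ring
      calc 2*t*B^2 = 2*t*((|H-2|/H)^2*A^2) := by rw [hBsq]
        _ ≤ (1 - |H-2|/H)*A*(1-B^2) := by linarith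
        _ = (A-B)*(1-B^2) := by rw [hAB]
  rw [div_le_iff₀ hB2pos]
  have h2t : (0:ℝ) < 2/t := by positivity
  calc 4*B^2 = 2/t*(2*t*B^2) := by field_simp; ring
    _ ≤ 2/t*((A-B)*(1-B^2)) := mul_le_mul_of_nonneg_left key h2t.le
    _ = 2/t*(A-B)*(1-B^2) := by ring

/-- for small y_0 the series Σ|y_j| converges and has sum less than 4. -/
theorem stmt_4 :
    ∃ δ > (0:ℝ), ∀ y h : ℕ → ℝ,
      y 0 ∈ Set.Ioo (0:ℝ) 1 → y 0 < δ →
      h 0 = 1 + 2 * (y 0)^2 / (1 - (y 0)^2) →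
      (∀ i : ℕ, y (i+1) = (1 - 2 / h i) * y i) →
      (∀ i : ℕ, h (i+1) = h i + 4 * (y (i+1))^2 / (1 - (y (i+1))^2)) →
      Summable (fun j : ℕ => |y j|) ∧ (∑' j : ℕ, |y j|) < 4 := by
  refine ⟨1/100, by norm_num, ?_⟩
  intro y h hmem hδ hh0 hyrec hhrec
  obtain ⟨ht0, ht1⟩ := hmem
  set t := y 0 with htdef
  have hts : t < 1/100 := hδ
  have ht2 : t^2 ≤ 1/10000 := by nlinarith
  have h1t : (0:ℝ) < 1 - t^2 := by nlinarith
  have he0pos : 0 < 2*t^2/(1-t^2) := by positivity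
  have he0small : 2*t^2/(1-t^2) ≤ 1/1000 := by
    rw [div_le_iff₀ h1t]; nlinarith
  -- Main invariant
  have P : ∀ n, |y n| ≤ t ∧ 1 + 2*t^2/(1-t^2) ≤ h n ∧
      h n + 2/t*|y n| ≤ 2*t^2/(1-t^2) + 3 := by
    intro n
    induction n with
    | zero =>
      have hy0 : |y 0| = t := abs_of_pos ht0
      refine ⟨le_of_eq hy0, ?_, ?_⟩
      · rw [hh0]
      · rw [hh0, hy0]
        have : 2/t*t = 2 := by field_simp
        linarith
    | succ n ih =>
      obtain ⟨ha, hh1, hphi⟩ := ih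
      have habsyn : 0 ≤ 2/t*|y n| := by positivity
      have hHpos : 0 < h n := by linarith
      have hH2 : h n ≤ 3001/1000 := by linarith
      have habs : |y (n+1)| = |h n - 2| / h n * |y n| := by
        rw [hyrec n, abs_mul]
        congr 1
        have : 1 - 2/h n = (h n - 2)/h n := by field_simp
        rw [this, abs_div, abs_of_pos hHpos]
      have hρ1 : |h n - 2|/h n ≤ 1 := by
        rw [div_le_one hHpos]
        rcases abs_cases (h n - 2) with ⟨h1,h2⟩|⟨h1,h2⟩ <;> linarith
      have ha' : |y (n+1)| ≤ |y n| := by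
        rw [habs]
        exact mul_le_of_le_one_left (abs_nonneg _) hρ1
      have hat : |y (n+1)| ≤ t := ha'.trans ha
      have hysq : (y (n+1))^2 ≤ t^2 := by
        nlinarith [abs_nonneg (y (n+1)), sq_abs (y (n+1))]
      have hden : 0 < 1 - (y (n+1))^2 := by nlinarith
      have hincr : 0 ≤ 4*(y (n+1))^2/(1 - (y (n+1))^2) :=
        div_nonneg (by positivity) hden.le
      refine ⟨hat, ?_, ?_⟩
      · rw [hhrec n]; linarith
      · have hstep := phi_step ht0 hts.le hh1 hH2 (abs_nonneg (y n)) ha habs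
        have hsq : (y (n+1))^2 = |y (n+1)|^2 := (sq_abs _).symm
        rw [hhrec n, hsq]
        linarith
  -- monotonicity of h
  have hstep_mono : ∀ n, h n ≤ h (n+1) := by
    intro n
    have hat := (P (n+1)).1
    have hysq : (y (n+1))^2 ≤ t^2 := by
      nlinarith [abs_nonneg (y (n+1)), sq_abs (y (n+1))]
    have hden : 0 < 1 - (y (n+1))^2 := by nlinarith
    have hincr : 0 ≤ 4*(y (n+1))^2/(1 - (y (n+1))^2) :=
      div_nonneg (by positivity) hden.le
    rw [hhrec n]; linarith
  have hmono : Monotone h := monotone_nat_of_le_succ hstep_mono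
  -- increment lower bound
  have hinc : ∀ n, h n + 4*(y (n+1))^2 ≤ h (n+1) := by
    intro n
    have hat := (P (n+1)).1
    have hysq : (y (n+1))^2 ≤ t^2 := by
      nlinarith [abs_nonneg (y (n+1)), sq_abs (y (n+1))]
    have hden : 0 < 1 - (y (n+1))^2 := by nlinarith
    have : 4*(y (n+1))^2 ≤ 4*(y (n+1))^2/(1 - (y (n+1))^2) := by
      rw [le_div_iff₀ hden]; nlinarith [sq_nonneg (y (n+1))]
    rw [hhrec n]; linarith
  -- the time M
  obtain ⟨M, hM1, hM2⟩ : ∃ M : ℕ, 5/(8*t) ≤ (M:ℝ) ∧ (M:ℝ) < 5/(8*t) + 1 :=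
    ⟨⌈5/(8*t)⌉₊, Nat.le_ceil _, Nat.ceil_lt_add_one (by positivity)⟩
  have h58 : 5/(8*t)*t = 5/8 := by field_simp
  have hMt : (M:ℝ)*t ≤ 127/200 := by nlinarith
  -- h M - 1 ≥ (2/5) t
  have hE : 1 + 2/5*t ≤ h M := by
    by_cases hc : ∀ i < M, h i < 1 + 2/5*t
    · -- lower bound on |y k|
      have hlow : ∀ k, k ≤ M → t*(1 - 4/5*(k:ℝ)*t) ≤ |y k| := by
        intro k
        induction k with
        | zero =>
          intro _
          rw [abs_of_pos ht0]
          push_cast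
          nlinarith
        | succ k ih =>
          intro hk
          have hkM : k < M := hk
          have ihk := ih hkM.le
          have hek : h k < 1 + 2/5*t := hc k hkM
          have hH1 : 1 + 2*t^2/(1-t^2) ≤ h k := (P k).2.1
          have hHgt1 : 1 < h k := by linarith
          have hHpos : 0 < h k := by linarith
          have habs : |y (k+1)| = |h k - 2| / h k * |y k| := by
            rw [hyrec k, abs_mul]
            congr 1
            have : 1 - 2/h k = (h k - 2)/h k := by field_simp
            rw [this, abs_div, abs_of_pos hHpos]
          have hρ : 3 - 2*h k ≤ |h k - 2|/h k := by
            have hneg : h k - 2 < 0 := by nlinarith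
            rw [abs_of_neg hneg, le_div_iff₀ hHpos]
            nlinarith [sq_nonneg (h k - 1)]
          have hkMt : (k:ℝ)*t ≤ (M:ℝ)*t := by
            have : (k:ℝ) ≤ (M:ℝ) := by exact_mod_cast hkM.le
            nlinarith
          have hk1Mt : ((k:ℝ)+1)*t ≤ (M:ℝ)*t := by
            have : (k:ℝ)+1 ≤ (M:ℝ) := by exact_mod_cast hk
            nlinarith
          have hpos1 : (0:ℝ) ≤ 1 - 4/5*(k:ℝ)*t := by nlinarith
          have hpos2 : (0:ℝ) ≤ 3 - 2*h k := by nlinarith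
          have h3pos : (0:ℝ) ≤ (3 - 2*h k) - (1 - 4/5*t) := by nlinarith
          have hc0 : (0:ℝ) ≤ 4/5*(k:ℝ)*t := by positivity
          push_cast
          calc t*(1 - 4/5*((k:ℝ)+1)*t)
              ≤ (3 - 2*h k)*(t*(1 - 4/5*(k:ℝ)*t)) := by
                nlinarith [mul_nonneg h3pos (mul_nonneg ht0.le hpos1),
                  mul_nonneg (mul_nonneg ht0.le ht0.le) hc0]
            _ ≤ (3 - 2*h k)*|y k| := mul_le_mul_of_nonneg_left ihk hpos2
            _ ≤ (|h k - 2|/h k)*|y k| :=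
                mul_le_mul_of_nonneg_right hρ (abs_nonneg _)
            _ = |y (k+1)| := by rw [habs]
      -- growth of h
      have hgrow : ∀ n, n ≤ M → h 0 + (n:ℝ)*(24/25*t^2) ≤ h n := by
        intro n
        induction n with
        | zero => intro _; simp
        | succ n ih =>
          intro hn
          have hnM : n < M := hn
          have ihn := ih hnM.le
          have hlown := hlow (n+1) hn
          have hn1Mt : ((n:ℝ)+1)*t ≤ (M:ℝ)*t := by
            have : (n:ℝ)+1 ≤ (M:ℝ) := by exact_mod_cast hn
            nlinarith
          have hlb : 123/250*t ≤ |y (n+1)| := by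
            have : (1:ℝ) - 4/5*((n:ℝ)+1)*t ≥ 123/250 := by nlinarith
            have h0' : t*(123/250) ≤ t*(1 - 4/5*((n:ℝ)+1)*t) := by nlinarith
            push_cast at hlown
            linarith
          have hsq : 24/25*t^2 ≤ 4*(y (n+1))^2 := by
            have : (123/250*t)^2 ≤ |y (n+1)|^2 := by
              nlinarith [abs_nonneg (y (n+1))]
            rw [sq_abs] at this
            nlinarith
          have := hinc n
          push_cast
          linarith
      have hgM := hgrow M le_rfl
      have hMlb : 5/(8*t)*(24/25*t^2) ≤ (M:ℝ)*(24/25*t^2) := by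
        have : 0 ≤ 24/25*t^2 := by positivity
        nlinarith
      have h58' : 5/(8*t)*(24/25*t^2) = 3/5*t := by field_simp; ring
      rw [hh0] at hgM
      have : 0 ≤ 2*t^2/(1-t^2) := he0pos.le
      nlinarith
    · push_neg at hc
      obtain ⟨i, hiM, hie⟩ := hc
      have := hmono hiM.le
      linarith
  -- tail ratio bound
  have hr0 : (0:ℝ) < 1 - 2/5*t := by nlinarith
  have hr1 : 1 - 2/5*t < 1 := by nlinarith
  have htail : ∀ j, M ≤ j → |y (j+1)| ≤ (1 - 2/5*t) * |y j| := by
    intro j hj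
    have hHge : 1 + 2/5*t ≤ h j := le_trans hE (hmono hj)
    have hphi := (P j).2.2
    have habsyn : 0 ≤ 2/t*|y j| := by positivity
    have hH2 : h j ≤ 3001/1000 := by linarith
    have hHpos : 0 < h j := by linarith
    have habs : |y (j+1)| = |h j - 2| / h j * |y j| := by
      rw [hyrec j, abs_mul]
      congr 1
      have : 1 - 2/h j = (h j - 2)/h j := by field_simp
      rw [this, abs_div, abs_of_pos hHpos]
    have hρ : |h j - 2|/h j ≤ 1 - 2/5*t := by
      rcases le_or_gt (h j) 2 with hc | hc
      · have habs2 : |h j - 2| = 2 - h j := by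
          rw [abs_of_nonpos (by linarith)]; ring
        rw [habs2]
        have h1 : (2 - h j)/h j ≤ 2 - h j :=
          div_le_self (by linarith) (by linarith)
        linarith
      · have habs2 : |h j - 2| = h j - 2 := by
          rw [abs_of_pos (by linarith)]
        rw [habs2, div_le_iff₀ hHpos]
        nlinarith
    rw [habs]
    exact mul_le_mul_of_nonneg_right hρ (abs_nonneg _)
  -- geometric decay after M
  have hgeo : ∀ n, |y (M + n)| ≤ t * (1 - 2/5*t)^n := by
    intro n
    induction n with
    | zero => simpa using (P M).1
    | succ n ih =>
      have h1 := htail (M+n) (Nat.le_add_right M n)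
      have h2 : |y (M+n+1)| ≤ (1 - 2/5*t)*(t*(1 - 2/5*t)^n) := by
        calc |y (M+n+1)| ≤ (1 - 2/5*t) * |y (M+n)| := h1
          _ ≤ (1 - 2/5*t)*(t*(1 - 2/5*t)^n) :=
            mul_le_mul_of_nonneg_left ih hr0.le
      calc |y (M + (n+1))| = |y (M+n+1)| := by ring_nf
        _ ≤ (1 - 2/5*t)*(t*(1 - 2/5*t)^n) := h2
        _ = t*(1 - 2/5*t)^(n+1) := by ring
  -- summability
  have hsummable : Summable (fun j : ℕ => |y j|) := by
    apply summable_of_ratio_norm_eventually_le hr1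
    filter_upwards [eventually_ge_atTop M] with j hj
    simpa [Real.norm_eq_abs, abs_abs] using htail j hj
  refine ⟨hsummable, ?_⟩
  have hsplit := Summable.sum_add_tsum_nat_add M hsummable
  -- head bound
  have hhead : ∑ i ∈ range M, |y i| ≤ (M:ℝ)*t := by
    calc ∑ i ∈ range M, |y i| ≤ ∑ i ∈ range M, t :=
        Finset.sum_le_sum (fun i _ => (P i).1)
      _ = (M:ℝ)*t := by rw [Finset.sum_const, card_range]; rw [nsmul_eq_mul]
  -- tail bound
  have hgsum : Summable (fun n : ℕ => t*(1 - 2/5*t)^n) :=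
    (summable_geometric_of_lt_one (by linarith) hr1).mul_left t
  have htsum_tail : ∑' n : ℕ, |y (n + M)| ≤ 5/2 := by
    have h1 : ∑' n : ℕ, |y (n + M)| ≤ ∑' n : ℕ, t*(1 - 2/5*t)^n := by
      have hs2 : Summable (fun n : ℕ => |y (n + M)|) :=
        (summable_nat_add_iff M).mpr hsummable
      apply Summable.tsum_le_tsum _ hs2 hgsum
      intro n
      have := hgeo n
      rwa [Nat.add_comm M n] at this
    have h2 : ∑' n : ℕ, t*(1 - 2/5*t)^n = t * (2/5*t)⁻¹ := by
      rw [tsum_mul_left, tsum_geometric_of_lt_one (by linarith) hr1]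
      congr 1
      ring_nf
    have h3 : t * (2/5*t)⁻¹ = 5/2 := by field_simp
    rw [h2, h3] at h1
    exact h1
  have : (∑' j : ℕ, |y j|) ≤ (M:ℝ)*t + 5/2 := by
    rw [← hsplit]
    exact add_le_add hhead htsum_tail
  linarith
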